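/- For any λ with 0 < λ < 1, at least one of the following holds: (i) Π^s(λ) < Π^s(1), or (ii) the set {θ ∈ [0,θ̄] : V^{s,λ}(θ) > 0} strictly contains the set {θ ∈ [0,θ̄] : V^{s,1}(θ) > 0} (content diversity is strictly higher under the imperfect certificate λ than under perfect certification). -/

import Mathlib

open Set

/-- Effective virtual value `R(x, λ) = (x + (1−λ)/λ)·A(λ) − γ/λ`. -/
noncomputable def R (A : ℝ → ℝ) (γ x l : ℝ) : ℝ := (x + (1 - l) / l) * A l - γ / l

/-- Single-certificate views `V^{s,λ}(θ) = (c')⁻¹(max{R(φ(θ),λ), 0})`. -/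
noncomputable def Vs (A cinv : ℝ → ℝ) (γ x l : ℝ) : ℝ := cinv (max (R A γ x l) 0)

/-- Single-certificate profit `Π^s(λ)`. -/
noncomputable def Pis (A c cinv φ f : ℝ → ℝ) (γ θb l : ℝ) : ℝ :=
  ∫ θ in (0:ℝ)..θb,
    (R A γ (φ θ) l * Vs A cinv γ (φ θ) l - c (Vs A cinv γ (φ θ) l)) * f θ

lemma tangent_le' (c c' : ℝ → ℝ) (hcconv : StrictConvexOn ℝ (Ici 0) c)
    (hcderiv : ∀ v ∈ Ici (0:ℝ), HasDerivWithinAt c (c' v) (Ici 0) v) :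
    ∀ a ∈ Ici (0:ℝ), ∀ b ∈ Ici (0:ℝ), c b + c' b * (a - b) ≤ c a := by
  intro a ha b hb
  rcases lt_trichotomy a b with hab | hab | hab
  · have h := hcconv.convexOn.slope_le_of_hasDerivWithinAt ha hb hab (hcderiv b hb)
    rw [slope_def_field] at h
    have hba : (0:ℝ) < b - a := by linarith
    rw [div_le_iff₀ hba] at h
    nlinarith
  · simp [hab]
  · have h := hcconv.convexOn.le_slope_of_hasDerivWithinAt hb ha hab (hcderiv b hb)
    rw [slope_def_field] at h
    have hba : (0:ℝ) < a - b := by linarith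
    rw [le_div_iff₀ hba] at h
    nlinarith

lemma tangent_lt' (c c' : ℝ → ℝ) (hcconv : StrictConvexOn ℝ (Ici 0) c)
    (hcderiv : ∀ v ∈ Ici (0:ℝ), HasDerivWithinAt c (c' v) (Ici 0) v) :
    ∀ a ∈ Ici (0:ℝ), ∀ b ∈ Ici (0:ℝ), a ≠ b → c b + c' b * (a - b) < c a := by
  intro a ha b hb hne
  rcases lt_trichotomy a b with hab | hab | hab
  · have h := hcconv.slope_lt_of_hasDerivWithinAt ha hb hab (hcderiv b hb)
    rw [slope_def_field] at h
    have hba : (0:ℝ) < b - a := by linarith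
    rw [div_lt_iff₀ hba] at h
    nlinarith
  · exact absurd hab hne
  · have h := hcconv.lt_slope_of_hasDerivWithinAt hb ha hab (hcderiv b hb)
    rw [slope_def_field] at h
    have hba : (0:ℝ) < a - b := by linarith
    rw [lt_div_iff₀ hba] at h
    nlinarith

theorem stmt1
    (θb γ : ℝ) (A A' c c' cinv φ f : ℝ → ℝ)
    (hθb : 0 < θb) (hγ0 : 0 < γ) (hγ1 : γ < 1) (hγθ : γ < θb)
    (hA0 : A 0 = 0) (hA1 : A 1 = 1)
    (hAmono : StrictMonoOn A (Icc 0 1))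
    (hAderiv : ∀ y ∈ Icc (0:ℝ) 1, HasDerivWithinAt A (A' y) (Icc 0 1) y)
    (hc0 : c 0 = 0) (hc'0 : c' 0 = 0)
    (hcmono : StrictMonoOn c (Ici 0))
    (hcconv : StrictConvexOn ℝ (Ici 0) c)
    (hcderiv : ∀ v ∈ Ici (0:ℝ), HasDerivWithinAt c (c' v) (Ici 0) v)
    (hc'top : Filter.Tendsto c' Filter.atTop Filter.atTop)
    (hcinv₁ : ∀ v, 0 ≤ v → cinv (c' v) = v)
    (hcinv₂ : ∀ y, 0 ≤ y → 0 ≤ cinv y ∧ c' (cinv y) = y)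
    (hφcont : ContinuousOn φ (Icc 0 θb))
    (hφmono : StrictMonoOn φ (Icc 0 θb))
    (hφtop : φ θb = θb) (hφ0 : φ 0 < 0)
    (hfcont : ContinuousOn f (Icc 0 θb))
    (hfpos : ∀ θ ∈ Icc (0:ℝ) θb, 0 < f θ) :
    ∀ l ∈ Ioo (0:ℝ) 1,
      Pis A c cinv φ f γ θb l < Pis A c cinv φ f γ θb 1 ∨
      {θ ∈ Icc (0:ℝ) θb | 0 < Vs A cinv γ (φ θ) 1} ⊂
        {θ ∈ Icc (0:ℝ) θb | 0 < Vs A cinv γ (φ θ) l} := by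
  intro l hl
  obtain ⟨hl0, hl1⟩ := hl
  have tle := tangent_le' c c' hcconv hcderiv
  have tlt := tangent_lt' c c' hcconv hcderiv
  have hccont : ContinuousOn c (Ici 0) := fun v hv => (hcderiv v hv).continuousWithinAt
  have hc'mono : StrictMonoOn c' (Ici 0) := by
    intro a ha b hb hab
    have h1 := tlt a ha b hb hab.ne
    have h2 := tlt b hb a ha hab.ne'
    nlinarith
  have cinv0 : cinv 0 = 0 := by
    have := hcinv₁ 0 le_rfl; rwa [hc'0] at this
  have cinvpos : ∀ y, 0 < y → 0 < cinv y := by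
    intro y hy
    obtain ⟨h1, h2⟩ := hcinv₂ y hy.le
    rcases h1.eq_or_lt with h | h
    · exfalso; rw [← h, hc'0] at h2; linarith
    · exact h
  have cinvmono : ∀ y z : ℝ, 0 ≤ y → y ≤ z → cinv y ≤ cinv z := by
    intro y z hy hyz
    by_contra h
    push_neg at h
    have hz := hy.trans hyz
    have := hc'mono (hcinv₂ z hz).1 (hcinv₂ y hy).1 h
    rw [(hcinv₂ z hz).2, (hcinv₂ y hy).2] at this
    linarith
  -- the continuous extension of cinv
  set H : ℝ → ℝ := fun y => if y < 0 then y else cinv y with hHdef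
  have hHmono : Monotone H := by
    intro y z hyz
    simp only [hHdef]
    by_cases hy : y < 0
    · by_cases hz : z < 0
      · simp [hy, hz, hyz]
      · push_neg at hz
        simp only [if_pos hy, if_neg (not_lt.mpr hz)]
        exact hy.le.trans (hcinv₂ z hz).1
    · push_neg at hy
      have hz : ¬ z < 0 := not_lt.mpr (hy.trans hyz)
      simp only [if_neg (not_lt.mpr hy), if_neg hz]
      exact cinvmono y z hy hyz
  have hHsurj : Function.Surjective H := by
    intro z
    rcases lt_or_ge z 0 with hz | hz
    · exact ⟨z, if_pos hz⟩
    · refine ⟨c' z, ?_⟩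
      have h0 : (0:ℝ) ≤ c' z := by
        rcases hz.eq_or_lt with h | h
        · rw [← h, hc'0]
        · rw [← hc'0]; exact (hc'mono (Set.mem_Ici.mpr le_rfl) hz h).le
      simp only [hHdef, if_neg (not_lt.mpr h0)]
      exact hcinv₁ z hz
  have hHcont : Continuous H := hHmono.continuous_of_surjective hHsurj
  have hHeq : ∀ r : ℝ, cinv (max r 0) = H (max r 0) := by
    intro r
    simp only [hHdef, if_neg (not_lt.mpr (le_max_right r 0))]
  -- facts about A
  have h0m : (0:ℝ) ∈ Icc (0:ℝ) 1 := ⟨le_rfl, zero_le_one⟩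
  have h1m : (1:ℝ) ∈ Icc (0:ℝ) 1 := ⟨zero_le_one, le_rfl⟩
  have hlm : l ∈ Icc (0:ℝ) 1 := ⟨hl0.le, hl1.le⟩
  have hAl0 : 0 < A l := by
    have := hAmono h0m hlm hl0; rwa [hA0] at this
  have hAl1 : A l < 1 := by
    have := hAmono hlm h1m hl1; rwa [hA1] at this
  have hR1 : ∀ x, R A γ x 1 = x - γ := by intro x; simp [R, hA1]
  have hRaff : ∀ x, R A γ x l = R A γ γ l + (x - γ) * A l := by
    intro x; simp only [R]; ring
  -- the profit kernel
  set G : ℝ → ℝ := fun r => r * cinv (max r 0) - c (cinv (max r 0)) with hGdef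
  have hVnn : ∀ r : ℝ, 0 ≤ cinv (max r 0) := fun r => (hcinv₂ _ (le_max_right r 0)).1
  have hGzero : ∀ r : ℝ, r ≤ 0 → G r = 0 := by
    intro r hr
    simp only [hGdef, max_eq_right hr, cinv0, hc0]; ring
  have hGy : ∀ r : ℝ, G r = max r 0 * cinv (max r 0) - c (cinv (max r 0)) := by
    intro r
    rcases le_or_gt r 0 with h | h
    · rw [hGzero r h, max_eq_right h, cinv0, hc0]; ring
    · simp only [hGdef, max_eq_left h.le]
  have hGstrict : ∀ r s : ℝ, r < s → 0 < s → G r < G s := by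
    intro r s hrs hs
    rw [hGy r, hGy s]
    set y1 := max r 0 with hy1def
    set y2 := max s 0 with hy2def
    have hy1 : (0:ℝ) ≤ y1 := le_max_right r 0
    have hy2 : 0 < y2 := lt_of_lt_of_le hs (le_max_left s 0)
    have hy12 : y1 < y2 := by
      rw [hy2def, max_eq_left hs.le]; exact max_lt hrs hs
    set V1 := cinv y1 with hV1def
    set V2 := cinv y2 with hV2def
    have hV1 : (0:ℝ) ≤ V1 := (hcinv₂ y1 hy1).1
    have hV2 : (0:ℝ) < V2 := cinvpos y2 hy2
    have hc'V2 : c' V2 = y2 := (hcinv₂ y2 hy2.le).2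
    rcases hV1.eq_or_lt with h | h
    · -- V1 = 0
      have hy1z : c' V1 = y1 := (hcinv₂ y1 hy1).2
      have htan := tlt 0 (Set.mem_Ici.mpr le_rfl) V2 hV2.le hV2.ne
      rw [hc'V2, hc0] at htan
      rw [← h, hc0]
      nlinarith
    · have htan := tle V1 hV1 V2 hV2.le
      rw [hc'V2] at htan
      nlinarith
  -- membership characterization
  have memVs : ∀ (x l' : ℝ), 0 < Vs A cinv γ x l' ↔ 0 < R A γ x l' := by
    intro x l'
    simp only [Vs]
    constructor
    · intro h
      by_contra hn
      push_neg at hn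
      rw [max_eq_right hn, cinv0] at h
      exact lt_irrefl 0 h
    · intro h
      rw [max_eq_left h.le]
      exact cinvpos _ h
  rcases lt_or_ge 0 (R A γ γ l) with hRγ | hRγ
  · -- diversity case
    right
    have hsub : {θ ∈ Icc (0:ℝ) θb | 0 < Vs A cinv γ (φ θ) 1} ⊆
        {θ ∈ Icc (0:ℝ) θb | 0 < Vs A cinv γ (φ θ) l} := by
      rintro θ ⟨hθ, hv⟩
      refine ⟨hθ, ?_⟩
      rw [memVs] at hv ⊢
      rw [hR1] at hv
      rw [hRaff]
      nlinarith
    rw [Set.ssubset_iff_of_subset hsub]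
    obtain ⟨θc, hθc, hφc⟩ : ∃ θ ∈ Icc (0:ℝ) θb, φ θ = γ := by
      have h := intermediate_value_Icc hθb.le hφcont
      have hmem : γ ∈ Icc (φ 0) (φ θb) := ⟨(hφ0.trans hγ0).le, by rw [hφtop]; exact hγθ.le⟩
      obtain ⟨θc, hθc, hφc⟩ := h hmem
      exact ⟨θc, hθc, hφc⟩
    refine ⟨θc, ⟨hθc, ?_⟩, ?_⟩
    · rw [memVs, hφc]; exact hRγ
    · rintro ⟨-, hv⟩
      rw [memVs, hR1, hφc] at hv
      linarith
  · -- profit case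
    left
    have hGmono' : ∀ r s : ℝ, r ≤ s → s ≤ 0 → G r = G s := by
      intro r s hrs hs
      rw [hGzero r (hrs.trans hs), hGzero s hs]
    -- rewrite the integrands
    have hPis : ∀ l' : ℝ, Pis A c cinv φ f γ θb l' =
        ∫ θ in (0:ℝ)..θb, G (R A γ (φ θ) l') * f θ := by
      intro l'; rfl
    rw [hPis l, hPis 1]
    -- continuity of the integrands
    have hGcont : ∀ l' : ℝ, ContinuousOn (fun θ => G (R A γ (φ θ) l') * f θ) (Icc 0 θb) := by
      intro l'
      have hRc : ContinuousOn (fun θ => R A γ (φ θ) l') (Icc 0 θb) := by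
        simp only [R]
        exact ((hφcont.add continuousOn_const).mul continuousOn_const).sub continuousOn_const
      have hMc : ContinuousOn (fun θ => max (R A γ (φ θ) l') 0) (Icc 0 θb) :=
        hRc.sup continuousOn_const
      have hVc : ContinuousOn (fun θ => H (max (R A γ (φ θ) l') 0)) (Icc 0 θb) :=
        hHcont.comp_continuousOn hMc
      have hcVc : ContinuousOn (fun θ => c (H (max (R A γ (φ θ) l') 0))) (Icc 0 θb) := by
        refine hccont.comp hVc ?_
        intro θ hθ
        simp only []
        rw [← hHeq]
        exact hVnn _
      have := ((hRc.mul hVc).sub hcVc).mul hfcont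
      refine this.congr ?_
      intro θ hθ
      simp only [hGdef, hHeq, Pi.mul_apply, Pi.sub_apply]
    -- pointwise comparison
    have hpt : ∀ θ ∈ Icc (0:ℝ) θb, φ θ ≤ γ →
        G (R A γ (φ θ) l) * f θ = G (R A γ (φ θ) 1) * f θ := by
      intro θ hθ hx
      have h1 : R A γ (φ θ) l ≤ 0 := by
        rw [hRaff]
        have : (φ θ - γ) * A l ≤ 0 :=
          mul_nonpos_of_nonpos_of_nonneg (by linarith) hAl0.le
        linarith
      have h2 : R A γ (φ θ) 1 ≤ 0 := by rw [hR1]; linarith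
      rw [hGzero _ h1, hGzero _ h2]
    have hpt2 : ∀ θ ∈ Icc (0:ℝ) θb, γ < φ θ →
        G (R A γ (φ θ) l) * f θ < G (R A γ (φ θ) 1) * f θ := by
      intro θ hθ hx
      have hf := hfpos θ hθ
      have hlt : R A γ (φ θ) l < R A γ (φ θ) 1 := by
        rw [hRaff, hR1]
        nlinarith
      have hpos : 0 < R A γ (φ θ) 1 := by rw [hR1]; linarith
      exact mul_lt_mul_of_pos_right (hGstrict _ _ hlt hpos) hf
    refine intervalIntegral.integral_lt_integral_of_continuousOn_of_le_of_exists_lt hθb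
      (hGcont l) (hGcont 1) ?_ ?_
    · intro θ hθ
      have hθ' : θ ∈ Icc (0:ℝ) θb := Ioc_subset_Icc_self hθ
      rcases le_or_gt (φ θ) γ with hx | hx
      · exact (hpt θ hθ' hx).le
      · exact (hpt2 θ hθ' hx).le
    · refine ⟨θb, ⟨hθb.le, le_rfl⟩, hpt2 θb ⟨hθb.le, le_rfl⟩ ?_⟩
      rw [hφtop]; exact hγθ
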